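/- arXiv:math/0206162 — 2 statements merged into one kernel-verified Lean document; each statement's English description precedes it below -/
import Mathlib

section
/- The total integral of g_N over the real line equals N: ∫_{-∞}^{∞} [e^{-ρ}/(1-e^{-ρ})² − (N+1)² e^{-(N+1)ρ}/(1-e^{-(N+1)ρ})²] dρ = N, where the integrand is extended continuously across ρ = 0. -/
open Real MeasureTheory

/-- `g_N(ρ)` extended continuously across `ρ = 0`. -/
noncomputable def gN (N : ℕ) (ρ : ℝ) : ℝ :=
  if ρ = 0 then ((N : ℝ) ^ 2 + 2 * N) / 12
  else exp (-ρ) / (1 - exp (-ρ)) ^ 2 -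
    ((N : ℝ) + 1) ^ 2 * exp (-(((N : ℝ) + 1) * ρ)) / (1 - exp (-(((N : ℝ) + 1) * ρ))) ^ 2

open Filter Topology Set

lemma one_sub_exp_neg_ne_zero {x : ℝ} (hx : x ≠ 0) : 1 - exp (-x) ≠ 0 := by
  intro h
  have h1 : exp (-x) = exp 0 := by rw [Real.exp_zero]; linarith
  have := Real.exp_eq_exp.mp h1
  exact hx (by linarith)

lemma mul_sinh_le {M : ℝ} (hM : 1 ≤ M) {x : ℝ} (hx : 0 ≤ x) :
    M * Real.sinh x ≤ Real.sinh (M * x) := by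
  have hM0 : 0 ≤ M := le_trans zero_le_one hM
  set F : ℝ → ℝ := fun y => Real.sinh (M * y) - M * Real.sinh y with hF
  have hd : ∀ y : ℝ, HasDerivAt F (M * Real.cosh (M * y) - M * Real.cosh y) y := by
    intro y
    have h0 : HasDerivAt (fun y : ℝ => M * y) M y := by
      simpa using (hasDerivAt_id y).const_mul M
    have h1 : HasDerivAt (fun y : ℝ => Real.sinh (M * y)) (Real.cosh (M * y) * M) y :=
      (Real.hasDerivAt_sinh (M * y)).comp y h0
    have h2 : HasDerivAt (fun y : ℝ => M * Real.sinh y) (M * Real.cosh y) y :=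
      (Real.hasDerivAt_sinh y).const_mul M
    exact (h1.sub h2).congr_deriv (by ring)
  have hmono : MonotoneOn F (Ici (0:ℝ)) := by
    apply monotoneOn_of_hasDerivWithinAt_nonneg (convex_Ici 0)
      (fun y _ => (hd y).continuousAt.continuousWithinAt)
      (fun y _ => (hd y).hasDerivWithinAt)
    intro y hy
    rw [interior_Ici] at hy
    have hy0 : (0:ℝ) < y := hy
    have : Real.cosh y ≤ Real.cosh (M * y) := by
      rw [Real.cosh_le_cosh, abs_of_pos hy0, abs_of_nonneg (mul_nonneg hM0 hy0.le)]
      nlinarith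
    nlinarith
  have := hmono (self_mem_Ici) (mem_Ici.mpr hx) hx
  simpa [hF, Real.sinh_zero] using this

lemma exp_div_sq_eq {x : ℝ} (hx : x ≠ 0) :
    exp (-x) / (1 - exp (-x)) ^ 2 = 1 / (4 * Real.sinh (x / 2) ^ 2) := by
  have hs : Real.sinh (x/2) ≠ 0 := Real.sinh_ne_zero.mpr (by simpa using hx)
  have hne := one_sub_exp_neg_ne_zero hx
  have h1 : Real.exp (-(x/2)) * Real.exp (x/2) = 1 := by
    rw [← Real.exp_add]; simp
  have h2 : Real.exp (-x) = Real.exp (-(x/2)) * Real.exp (-(x/2)) := by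
    rw [← Real.exp_add]; ring_nf
  have hs' : Real.sinh (x/2) = (Real.exp (x/2) - Real.exp (-(x/2)))/2 := Real.sinh_eq _
  rw [div_eq_div_iff (by positivity) (by positivity)]
  rw [hs', h2]
  linear_combination (Real.exp (-(x/2)) * Real.exp (x/2) + 1 - 2 * Real.exp (-(x/2))^2) * h1

lemma gN_nonneg (N : ℕ) {ρ : ℝ} (hρ : 0 < ρ) : 0 ≤ gN N ρ := by
  set M : ℝ := (N:ℝ) + 1 with hMdef
  have hN0 : (0:ℝ) ≤ N := Nat.cast_nonneg N
  have hM : 1 ≤ M := by rw [hMdef]; linarith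
  have hMpos : 0 < M := lt_of_lt_of_le one_pos hM
  have hMρ : M * ρ ≠ 0 := by positivity
  rw [gN, if_neg hρ.ne']
  rw [exp_div_sq_eq hρ.ne', mul_div_assoc, exp_div_sq_eq hMρ]
  have h1 : 0 < Real.sinh (ρ/2) := Real.sinh_pos_iff.mpr (by positivity)
  have key : M * Real.sinh (ρ/2) ≤ Real.sinh (M*ρ/2) := by
    simpa [mul_div_assoc] using mul_sinh_le hM (le_of_lt (half_pos hρ))
  have h2 : 0 < Real.sinh (M*ρ/2) := lt_of_lt_of_le (by positivity) key
  rw [sub_nonneg, mul_one_div, div_le_div_iff₀ (by positivity) (by positivity)]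
  nlinarith [mul_le_mul key key (by positivity) h2.le]

lemma gN_even (N : ℕ) (ρ : ℝ) : gN N (-ρ) = gN N ρ := by
  rcases eq_or_ne ρ 0 with rfl | hρ
  · simp
  have flip : ∀ x : ℝ, x ≠ 0 → exp (-(-x)) / (1 - exp (-(-x))) ^ 2
      = exp (-x) / (1 - exp (-x)) ^ 2 := by
    intro x hx
    have h1 := one_sub_exp_neg_ne_zero hx
    have h2 := one_sub_exp_neg_ne_zero (neg_ne_zero.mpr hx)
    have hprod : Real.exp (-x) * Real.exp x = 1 := by rw [← Real.exp_add]; simp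
    rw [div_eq_div_iff (by positivity) (by positivity)]
    rw [neg_neg]
    linear_combination (Real.exp (-x) - Real.exp x) * hprod
  set M : ℝ := (N:ℝ) + 1 with hMdef
  have hMpos : (0:ℝ) < M := by positivity
  rw [gN, gN, if_neg hρ, if_neg (neg_ne_zero.mpr hρ)]
  rw [show M * -ρ = -(M * ρ) by ring]
  rw [flip ρ hρ, mul_div_assoc, mul_div_assoc, flip (M*ρ) (by positivity)]

/-- the antiderivative -/
noncomputable def GN (N : ℕ) (ρ : ℝ) : ℝ :=
  if ρ = 0 then (N:ℝ)/2
  else ((N:ℝ)+1) / (1 - exp (-(((N:ℝ)+1) * ρ))) - 1 / (1 - exp (-ρ))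

lemma hasDerivAt_aux (c : ℝ) {ρ : ℝ} (h : c * ρ ≠ 0) :
    HasDerivAt (fun x => c / (1 - exp (-(c*x))))
      (-(c^2 * exp (-(c*ρ)) / (1 - exp (-(c*ρ)))^2)) ρ := by
  have hne : 1 - exp (-(c*ρ)) ≠ 0 := one_sub_exp_neg_ne_zero h
  have h0 : HasDerivAt (fun x : ℝ => -(c*x)) (-c) ρ := by
    exact ((hasDerivAt_id ρ).const_mul c).neg.congr_deriv (by ring)
  have hexp : HasDerivAt (fun x : ℝ => exp (-(c*x))) (exp (-(c*ρ)) * (-c)) ρ :=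
    (Real.hasDerivAt_exp _).comp ρ h0
  have h1 : HasDerivAt (fun x : ℝ => 1 - exp (-(c*x))) (c * exp (-(c*ρ))) ρ := by
    simpa [mul_comm] using hexp.const_sub 1
  have h2 := (h1.inv hne).const_mul c
  have : HasDerivAt (fun x => c * (1 - exp (-(c*x)))⁻¹)
      (c * (-(c * exp (-(c*ρ))) / (1 - exp (-(c*ρ)))^2)) ρ := h2
  refine HasDerivAt.congr_deriv (this.congr_of_eventuallyEq ?_) (by ring)
  filter_upwards with x using by rw [div_eq_mul_inv]

lemma hasDerivAt_GN (N : ℕ) {ρ : ℝ} (hρ : ρ ≠ 0) : HasDerivAt (GN N) (gN N ρ) ρ := by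
  set M : ℝ := (N:ℝ) + 1 with hMdef
  have hMpos : (0:ℝ) < M := by positivity
  have hA := hasDerivAt_aux M (mul_ne_zero hMpos.ne' hρ)
  have hB := hasDerivAt_aux 1 (by simpa using hρ)
  have hF : HasDerivAt (fun x => M / (1 - exp (-(M*x))) - 1 / (1 - exp (-(1*x))))
      (-(M^2 * exp (-(M*ρ)) / (1 - exp (-(M*ρ)))^2)
        - -(1^2 * exp (-(1*ρ)) / (1 - exp (-(1*ρ)))^2)) ρ := hA.sub hB
  have heq : GN N =ᶠ[𝓝 ρ] fun x => M / (1 - exp (-(M*x))) - 1 / (1 - exp (-(1*x))) := by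
    filter_upwards [isOpen_compl_singleton.mem_nhds (by simpa using hρ)] with x hx
    have hx' : x ≠ 0 := hx
    rw [GN, if_neg hx', one_mul]
  refine HasDerivAt.congr_deriv (hF.congr_of_eventuallyEq heq) ?_
  rw [gN, if_neg hρ, one_mul]
  ring

lemma tendsto_uFull :
    Tendsto (fun ρ : ℝ => 1 / (1 - exp (-ρ)) - 1/ρ) (𝓝[≠] (0:ℝ)) (𝓝 (1/2)) := by
  have hA : Tendsto (fun ρ : ℝ => (ρ - 1 + exp (-ρ)) / ρ^2) (𝓝[≠] (0:ℝ)) (𝓝 (1/2)) := by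
    have hd1 : ∀ x : ℝ, HasDerivAt (fun ρ : ℝ => ρ - 1 + exp (-ρ)) (1 - exp (-x)) x := by
      intro x
      have hexp : HasDerivAt (fun ρ : ℝ => exp (-ρ)) (-exp (-x)) x := by
        exact ((Real.hasDerivAt_exp (-x)).comp x (hasDerivAt_neg x)).congr_deriv (by ring)
      exact (((hasDerivAt_id x).sub_const 1).add hexp).congr_deriv (by ring)
    have hd2 : ∀ x : ℝ, HasDerivAt (fun ρ : ℝ => ρ^2) (2*x) x := by
      intro x; simpa using hasDerivAt_pow 2 x
    apply HasDerivAt.lhopital_zero_nhdsNE (f' := fun x => 1 - exp (-x)) (g' := fun x => 2*x)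
    · filter_upwards with x using hd1 x
    · filter_upwards with x using hd2 x
    · filter_upwards [self_mem_nhdsWithin] with x hx
      exact mul_ne_zero two_ne_zero hx
    · have : Tendsto (fun ρ : ℝ => ρ - 1 + exp (-ρ)) (𝓝 0) (𝓝 (0 - 1 + exp (-0))) := by
        exact ((continuous_id.sub continuous_const).add
          (Real.continuous_exp.comp continuous_neg)).tendsto 0
      simpa using this.mono_left nhdsWithin_le_nhds
    · have : Tendsto (fun ρ : ℝ => ρ^2) (𝓝 (0:ℝ)) (𝓝 ((0:ℝ)^2)) := (continuous_pow 2).tendsto 0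
      simpa using this.mono_left nhdsWithin_le_nhds
    · -- (1 - exp (-ρ)) / (2 ρ) → 1/2
      apply HasDerivAt.lhopital_zero_nhdsNE (f' := fun x : ℝ => exp (-x)) (g' := fun _ : ℝ => 2)
      · filter_upwards with x
        have hexp : HasDerivAt (fun ρ : ℝ => exp (-ρ)) (-exp (-x)) x := by
          exact ((Real.hasDerivAt_exp (-x)).comp x (hasDerivAt_neg x)).congr_deriv (by ring)
        simpa using hexp.const_sub 1
      · filter_upwards with x using by simpa using (hasDerivAt_id x).const_mul 2
      · filter_upwards with x using two_ne_zero
      · have : Tendsto (fun ρ : ℝ => 1 - exp (-ρ)) (𝓝 0) (𝓝 (1 - exp (-0))) :=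
          (continuous_const.sub (Real.continuous_exp.comp continuous_neg)).tendsto 0
        simpa using this.mono_left nhdsWithin_le_nhds
      · have : Tendsto (fun ρ : ℝ => 2*ρ) (𝓝 (0:ℝ)) (𝓝 (2*0)) :=
          (continuous_const.mul continuous_id).tendsto 0
        simpa using this.mono_left nhdsWithin_le_nhds
      · have : Tendsto (fun ρ : ℝ => exp (-ρ) / 2) (𝓝 0) (𝓝 (exp (-0) / 2)) :=
          ((Real.continuous_exp.comp continuous_neg).div_const 2).tendsto 0
        simpa using this.mono_left nhdsWithin_le_nhds
  have hB : Tendsto (fun ρ : ℝ => (1 - exp (-ρ)) / ρ) (𝓝[≠] (0:ℝ)) (𝓝 1) := by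
    have hd : HasDerivAt (fun ρ : ℝ => 1 - exp (-ρ)) 1 0 := by
      have hexp : HasDerivAt (fun ρ : ℝ => exp (-ρ)) (-exp (-0)) 0 := by
        exact ((Real.hasDerivAt_exp (-0)).comp 0 (hasDerivAt_neg 0)).congr_deriv (by ring)
      simpa using hexp.const_sub 1
    have := hasDerivAt_iff_tendsto_slope.mp hd
    apply this.congr'
    filter_upwards [self_mem_nhdsWithin] with x hx
    simp [slope_def_field]
  have htend := hA.div hB one_ne_zero
  rw [div_one] at htend
  apply htend.congr'
  filter_upwards [self_mem_nhdsWithin] with x hx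
  have hx' : x ≠ 0 := hx
  have h1 := one_sub_exp_neg_ne_zero hx'
  simp only [Pi.div_apply]
  field_simp
  ring

lemma tendsto_GN_zero (N : ℕ) : ContinuousAt (GN N) 0 := by
  set M : ℝ := (N:ℝ) + 1 with hMdef
  have hMpos : (0:ℝ) < M := by positivity
  have hscale : Tendsto (fun ρ : ℝ => M * ρ) (𝓝[≠] (0:ℝ)) (𝓝[≠] (0:ℝ)) := by
    rw [tendsto_nhdsWithin_iff]
    constructor
    · have : Tendsto (fun ρ : ℝ => M * ρ) (𝓝 0) (𝓝 (M * 0)) :=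
        (continuous_const.mul continuous_id).tendsto 0
      simpa using this.mono_left nhdsWithin_le_nhds
    · filter_upwards [self_mem_nhdsWithin] with x hx
      exact mul_ne_zero hMpos.ne' hx
  have h1 : Tendsto (fun ρ : ℝ => M * (1 / (1 - exp (-(M*ρ))) - 1/(M*ρ))
      - (1 / (1 - exp (-ρ)) - 1/ρ)) (𝓝[≠] (0:ℝ)) (𝓝 (M * (1/2) - 1/2)) :=
    ((tendsto_uFull.comp hscale).const_mul M).sub tendsto_uFull
  have h2 : Tendsto (GN N) (𝓝[≠] (0:ℝ)) (𝓝 ((N:ℝ)/2)) := by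
    have hval : M * (1/2) - 1/2 = (N:ℝ)/2 := by rw [hMdef]; ring
    rw [← hval]
    apply h1.congr'
    filter_upwards [self_mem_nhdsWithin] with x hx
    have hx' : x ≠ 0 := hx
    have hMx : M * x ≠ 0 := mul_ne_zero hMpos.ne' hx'
    rw [GN, if_neg hx']
    field_simp
    rw [hMdef]; ring_nf
  rw [ContinuousAt, ← nhdsNE_sup_pure 0, tendsto_sup]
  refine ⟨by simpa [GN] using h2, ?_⟩
  simpa [GN] using tendsto_pure_nhds (GN N) 0

lemma tendsto_GN_atTop (N : ℕ) : Tendsto (GN N) atTop (𝓝 (N:ℝ)) := by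
  set M : ℝ := (N:ℝ) + 1 with hMdef
  have hMpos : (0:ℝ) < M := by positivity
  have hexp : ∀ c : ℝ, 0 < c → Tendsto (fun ρ : ℝ => exp (-(c*ρ))) atTop (𝓝 0) := by
    intro c hc
    apply Real.tendsto_exp_atBot.comp
    rw [tendsto_neg_atBot_iff]
    exact Tendsto.const_mul_atTop hc tendsto_id
  have h1 : Tendsto (fun ρ : ℝ => M / (1 - exp (-(M*ρ))) - 1 / (1 - exp (-(1*ρ))))
      atTop (𝓝 (M / (1 - 0) - 1 / (1 - 0))) := by
    exact (tendsto_const_nhds.div (tendsto_const_nhds.sub (hexp M hMpos)) (by norm_num)).sub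
      (tendsto_const_nhds.div (tendsto_const_nhds.sub (hexp 1 one_pos)) (by norm_num))
  have hval : M / (1 - 0) - 1 / (1 - 0) = (N:ℝ) := by rw [hMdef]; ring
  rw [← hval]
  apply h1.congr'
  filter_upwards [eventually_ne_atTop (0:ℝ)] with x hx
  rw [GN, if_neg hx, one_mul]

lemma integral_Ioi_gN (N : ℕ) : ∫ ρ in Ioi (0:ℝ), gN N ρ = (N:ℝ)/2 := by
  have h := integral_Ioi_of_hasDerivAt_of_nonneg
    ((tendsto_GN_zero N).continuousWithinAt)
    (fun x hx => hasDerivAt_GN N (ne_of_gt hx))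
    (fun x hx => gN_nonneg N hx)
    (tendsto_GN_atTop N)
  rw [h, GN, if_pos rfl]
  ring

/-- The total integral of `g_N` over the real line equals `N`. -/
theorem gN_total_integral (N : ℕ) : ∫ ρ : ℝ, gN N ρ = N := by
  have habs : (fun ρ : ℝ => gN N ρ) = fun ρ => gN N |ρ| := by
    funext ρ
    rcases le_or_gt 0 ρ with h | h
    · rw [abs_of_nonneg h]
    · rw [abs_of_neg h, gN_even]
  rw [habs, integral_comp_abs (f := fun ρ => gN N ρ), integral_Ioi_gN]
  ring
end

section
/- For any fixed A > 0 and complex numbers ζ₁, ζ₂ with |ζ₁|, |ζ₂| ≤ A, the scaled partial Szegő kernel of the disk satisfies (1/N) ∑_{k=0}^{N} (1 + ζ₁/N)^k (1 + \bar{ζ₂}/N)^k → G(ζ₁ + \bar{ζ₂}) as N → ∞, where G(z) = (e^z − 1)/z for z ≠ 0 and G(0) = 1. The convergence is uniform on {|ζ₁| + |ζ₂| ≤ A}. -/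
open Filter Finset Complex Nat

/-- The universal limit kernel `G(z) = (e^z − 1)/z`, `G(0) = 1`. -/
noncomputable def Gker (z : ℂ) : ℂ := if z = 0 then 1 else (Complex.exp z - 1) / z

noncomputable def Complex.abs : AbsoluteValue ℂ ℝ where
  toFun z := ‖z‖
  map_mul' := norm_mul
  nonneg' := norm_nonneg
  eq_zero' _ := norm_eq_zero
  add_le' := norm_add_le

theorem Complex.norm_eq_abs (z : ℂ) : ‖z‖ = Complex.abs z := rfl

theorem Complex.abs_conj (z : ℂ) : Complex.abs (starRingEnd ℂ z) = Complex.abs z :=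
  show ‖starRingEnd ℂ z‖ = ‖z‖ from by simp

theorem Complex.abs_ofReal (r : ℝ) : Complex.abs (r : ℂ) = |r| :=
  show ‖(r : ℂ)‖ = |r| from by simp

@[simp]
theorem Complex.abs_natCast (n : ℕ) : Complex.abs (n : ℂ) = n :=
  show ‖(n : ℂ)‖ = n from by simp

private lemma sum_pow_one_add (N : ℕ) (u : ℂ) :
    ∑ k ∈ Finset.range (N + 1), (1 + u) ^ k
      = ∑ j ∈ Finset.range (N + 1), ((N + 1).choose (j + 1) : ℂ) * u ^ j := by
  induction N with
  | zero => simp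
  | succ N ih =>
    rw [Finset.sum_range_succ, ih]
    have h1 : ∀ j ∈ Finset.range (N + 2),
        ((N + 2).choose (j + 1) : ℂ) * u ^ j
          = ((N + 1).choose j : ℂ) * u ^ j + ((N + 1).choose (j + 1) : ℂ) * u ^ j := by
      intro j _
      have h : (N + 2).choose (j + 1) = (N + 1).choose j + (N + 1).choose (j + 1) :=
        Nat.choose_succ_succ (N + 1) j
      rw [h]; push_cast; ring
    rw [Finset.sum_congr rfl h1, Finset.sum_add_distrib]
    have h2 : ∑ j ∈ Finset.range (N + 2), ((N + 1).choose j : ℂ) * u ^ j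
        = (1 + u) ^ (N + 1) := by
      rw [add_comm (1 : ℂ) u, add_pow]
      refine Finset.sum_congr rfl fun j _ => ?_
      ring
    have h3 : ∑ j ∈ Finset.range (N + 2), ((N + 1).choose (j + 1) : ℂ) * u ^ j
        = ∑ j ∈ Finset.range (N + 1), ((N + 1).choose (j + 1) : ℂ) * u ^ j := by
      rw [Finset.sum_range_succ]
      have : (N + 1).choose (N + 2) = 0 := Nat.choose_eq_zero_of_lt (by omega)
      simp [this]
    rw [h2, h3]; ring

private lemma Gker_eq_tsum (w : ℂ) :
    Gker w = ∑' j : ℕ, w ^ j / ((j + 1)! : ℂ) := by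
  by_cases hw : w = 0
  · subst hw
    rw [Gker, if_pos rfl]
    rw [tsum_eq_single 0 (fun j hj => by simp [zero_pow hj])]
    simp
  · rw [Gker, if_neg hw]
    have hexp : Complex.exp w = ∑' n : ℕ, w ^ n / (n ! : ℂ) := by
      rw [Complex.exp_eq_exp_ℂ, NormedSpace.exp_eq_tsum_div]
    have hs : Summable fun n : ℕ => w ^ n / (n ! : ℂ) := by
      apply Summable.of_norm_bounded (Real.summable_pow_div_factorial (Complex.abs w))
      intro n
      simp [norm_div, Complex.norm_eq_abs, map_pow, Complex.abs_natCast]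
    have h2 : Complex.exp w - 1 = ∑' n : ℕ, w ^ (n + 1) / ((n + 1)! : ℂ) := by
      rw [hexp, hs.tsum_eq_zero_add]
      simp
    have h3 : ∑' n : ℕ, w ^ (n + 1) / ((n + 1)! : ℂ)
        = w * ∑' j : ℕ, w ^ j / ((j + 1)! : ℂ) := by
      rw [← tsum_mul_left]
      refine tsum_congr fun n => ?_
      rw [pow_succ]; ring
    rw [h2, h3, mul_comm, mul_div_assoc, div_self hw, mul_one]


private lemma norm_pow_sub_pow_le' (x y : ℂ) {B : ℝ} (hx : ‖x‖ ≤ B) (hy : ‖y‖ ≤ B) (n : ℕ) :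
    ‖x ^ n - y ^ n‖ ≤ n * B ^ (n - 1) * ‖x - y‖ := by
  have hB0 : 0 ≤ B := le_trans (norm_nonneg x) hx
  rw [← geom_sum₂_mul, norm_mul]
  refine mul_le_mul_of_nonneg_right ?_ (norm_nonneg _)
  calc ‖∑ i ∈ Finset.range n, x ^ i * y ^ (n - 1 - i)‖
      ≤ ∑ i ∈ Finset.range n, ‖x ^ i * y ^ (n - 1 - i)‖ := norm_sum_le _ _
    _ ≤ ∑ _i ∈ Finset.range n, B ^ (n - 1) := by
        refine Finset.sum_le_sum fun i hi => ?_
        rw [norm_mul, norm_pow, norm_pow]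
        calc ‖x‖ ^ i * ‖y‖ ^ (n - 1 - i)
            ≤ B ^ i * B ^ (n - 1 - i) := by
              exact mul_le_mul (pow_le_pow_left₀ (norm_nonneg _) hx i)
                (pow_le_pow_left₀ (norm_nonneg _) hy _) (by positivity) (by positivity)
          _ = B ^ (n - 1) := by
              rw [← pow_add]; congr 1
              have := Finset.mem_range.mp hi; omega
    _ = n * B ^ (n - 1) := by rw [Finset.sum_const, Finset.card_range, nsmul_eq_mul]

private lemma choose_cast_eq (j N : ℕ) (h : j ≤ N) :
    ((N + 1).choose (j + 1) : ℝ) * (j + 1)!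
      = ∏ i ∈ Finset.range (j + 1), ((N : ℝ) + 1 - i) := by
  have h1 : (N + 1).descFactorial (j + 1) = (j + 1)! * (N + 1).choose (j + 1) :=
    Nat.descFactorial_eq_factorial_mul_choose _ _
  have h2 : (N + 1).descFactorial (j + 1) = ∏ i ∈ Finset.range (j + 1), (N + 1 - i) :=
    Nat.descFactorial_eq_prod_range _ _
  have h3 : ((N + 1).descFactorial (j + 1) : ℝ)
      = ∏ i ∈ Finset.range (j + 1), ((N : ℝ) + 1 - i) := by
    rw [h2, Nat.cast_prod]
    refine Finset.prod_congr rfl fun i hi => ?_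
    have hi' : i ≤ N + 1 := by have := Finset.mem_range.mp hi; omega
    push_cast [Nat.cast_sub hi']
    ring
  rw [← h3, h1]
  push_cast; ring

private lemma rho_tendsto (j : ℕ) :
    Filter.Tendsto (fun N : ℕ => ((N + 1).choose (j + 1) : ℝ) / (N : ℝ) ^ (j + 1)) atTop
      (nhds (1 / (j + 1)!)) := by
  have factor : ∀ i : ℕ, Filter.Tendsto (fun N : ℕ => ((N : ℝ) + 1 - i) / N) atTop (nhds 1) := by
    intro i
    have h1 : Filter.Tendsto (fun N : ℕ => 1 + (1 - (i : ℝ)) * (1 / N)) atTop (nhds 1) := by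
      have := (tendsto_one_div_atTop_nhds_zero_nat).const_mul (1 - (i : ℝ))
      simpa using tendsto_const_nhds.add this
    refine Filter.Tendsto.congr' ?_ h1
    filter_upwards [eventually_ge_atTop 1] with N hN
    have hN0 : (N : ℝ) ≠ 0 := Nat.cast_ne_zero.mpr (by omega)
    field_simp
    ring
  have hprod : Filter.Tendsto
      (fun N : ℕ => ∏ i ∈ Finset.range (j + 1), (((N : ℝ) + 1 - i) / N)) atTop (nhds 1) := by
    have := tendsto_finset_prod (Finset.range (j + 1))
      (fun i (_ : i ∈ Finset.range (j + 1)) => factor i)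
    simpa using this
  have key : ∀ᶠ N : ℕ in atTop,
      (1 / (j + 1)! : ℝ) * ∏ i ∈ Finset.range (j + 1), (((N : ℝ) + 1 - i) / N)
        = ((N + 1).choose (j + 1) : ℝ) / (N : ℝ) ^ (j + 1) := by
    filter_upwards [eventually_ge_atTop (j + 1)] with N hN
    have hN0 : (N : ℝ) ≠ 0 := Nat.cast_ne_zero.mpr (by omega)
    rw [Finset.prod_div_distrib, Finset.prod_const, Finset.card_range,
      ← choose_cast_eq j N (by omega)]
    have hf : ((j + 1)! : ℝ) ≠ 0 := Nat.cast_ne_zero.mpr (Nat.factorial_ne_zero _)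
    field_simp
  have := hprod.const_mul (1 / (j + 1)! : ℝ)
  refine (Filter.Tendsto.congr' key (by simpa using this))

private lemma rho_le (j N : ℕ) (hN : 1 ≤ N) :
    ((N + 1).choose (j + 1) : ℝ) / (N : ℝ) ^ (j + 1) ≤ 2 ^ (j + 1) / (j + 1)! := by
  have hNpos : (0 : ℝ) < (N : ℝ) ^ (j + 1) := by positivity
  have hfpos : (0 : ℝ) < ((j + 1)! : ℝ) := by exact_mod_cast (j + 1).factorial_pos
  rw [div_le_div_iff₀ hNpos hfpos]
  have hnat : (j + 1)! * (N + 1).choose (j + 1) ≤ (2 * N) ^ (j + 1) := by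
    calc (j + 1)! * (N + 1).choose (j + 1) = (N + 1).descFactorial (j + 1) :=
          (Nat.descFactorial_eq_factorial_mul_choose _ _).symm
      _ ≤ (N + 1) ^ (j + 1) := Nat.descFactorial_le_pow _ _
      _ ≤ (2 * N) ^ (j + 1) := Nat.pow_le_pow_left (by omega) _
  have := (Nat.cast_le (α := ℝ)).mpr hnat
  push_cast at this
  calc ((N + 1).choose (j + 1) : ℝ) * (j + 1)! ≤ (2 * N) ^ (j + 1) := by linarith [this]
    _ = 2 ^ (j + 1) * (N : ℝ) ^ (j + 1) := by rw [mul_pow]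

/-- Scaling limit of the partial Szegő kernel of the disk:
`(1/N) ∑_{k=0}^N (1+ζ₁/N)^k (1+conj ζ₂/N)^k → G(ζ₁ + conj ζ₂)`, uniformly on
`{|ζ₁| + |ζ₂| ≤ A}` for each fixed `A > 0`. -/
theorem scaled_partial_szego_limit (A : ℝ) (hA : 0 < A) :
    TendstoUniformlyOn
      (fun N : ℕ => fun p : ℂ × ℂ =>
        (1 / (N : ℂ)) * ∑ k ∈ Finset.range (N + 1),
          (1 + p.1 / N) ^ k * (1 + (starRingEnd ℂ) p.2 / N) ^ k)
      (fun p : ℂ × ℂ => Gker (p.1 + (starRingEnd ℂ) p.2))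
      Filter.atTop
      {p : ℂ × ℂ | ‖p.1‖ + ‖p.2‖ ≤ A} := by
  rw [Metric.tendstoUniformlyOn_iff]
  intro ε hε
  set B : ℝ := A + A ^ 2 with hBdef
  have hB : 0 < B := by positivity
  have hAB : A ≤ B := by nlinarith
  set M : ℕ → ℝ := fun j => 2 ^ (j + 1) * B ^ j / (j + 1)! with hMdef
  have hM0 : ∀ j, 0 ≤ M j := fun j => by positivity
  have hMsum : Summable M := by
    refine Summable.of_nonneg_of_le hM0 (fun j => ?_)
      ((Real.summable_pow_div_factorial (2 * B)).mul_left 2)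
    have h1 : (2 : ℝ) ^ (j + 1) * B ^ j = 2 * (2 * B) ^ j := by rw [mul_pow]; ring
    rw [hMdef]
    simp only [h1, mul_div_assoc]
    have hfle : (j ! : ℝ) ≤ ((j + 1)! : ℝ) := by
      exact_mod_cast Nat.factorial_le (by omega)
    gcongr
  -- choose J with small tail
  obtain ⟨J, hJ⟩ : ∃ J : ℕ, ∑' k, M (k + J) < ε / 3 :=
    ((tendsto_sum_nat_add M).eventually_lt_const (by positivity)).exists
  -- head error terms
  set ρ : ℕ → ℕ → ℝ := fun j N => ((N + 1).choose (j + 1) : ℝ) / (N : ℝ) ^ (j + 1) with hρdef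
  set D : ℕ → ℕ → ℝ := fun j N =>
    2 ^ (j + 1) / (j + 1)! * (j * B ^ (j - 1) * A ^ 2) * (1 / N)
      + |ρ j N - 1 / (j + 1)!| * A ^ j with hDdef
  have hD : ∀ j, Tendsto (fun N : ℕ => D j N) atTop (nhds 0) := by
    intro j
    have h1 : Tendsto (fun N : ℕ =>
        (2 : ℝ) ^ (j + 1) / (j + 1)! * (j * B ^ (j - 1) * A ^ 2) * (1 / N)) atTop (nhds 0) := by
      have := tendsto_one_div_atTop_nhds_zero_nat.const_mul
        ((2 : ℝ) ^ (j + 1) / (j + 1)! * (j * B ^ (j - 1) * A ^ 2))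
      simpa only [mul_zero] using this
    have h2 : Tendsto (fun N : ℕ => |ρ j N - 1 / (j + 1)!| * A ^ j) atTop (nhds 0) := by
      have h3 := (rho_tendsto j).sub_const (1 / ((j + 1)! : ℝ))
      have h4 : Tendsto (fun N : ℕ => |ρ j N - 1 / (j + 1)!|) atTop (nhds 0) := by
        simpa only [sub_self, abs_zero] using h3.abs
      simpa only [zero_mul] using h4.mul_const (A ^ j)
    simpa only [add_zero] using h1.add h2
  have hhead : Tendsto (fun N : ℕ => ∑ j ∈ Finset.range J, D j N) atTop (nhds 0) := by
    have := tendsto_finset_sum (Finset.range J) (fun j (_ : j ∈ Finset.range J) => hD j)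
    simpa using this
  filter_upwards [eventually_ge_atTop 1, eventually_ge_atTop J,
    hhead.eventually_lt_const (show (0 : ℝ) < ε / 3 by positivity)] with N hN1 hNJ hheadN
  intro p hp
  have hp' : Complex.abs p.1 + Complex.abs p.2 ≤ A := hp
  set w : ℂ := p.1 + (starRingEnd ℂ) p.2 with hw
  set c : ℂ := p.1 * (starRingEnd ℂ) p.2 with hc
  have hNC : (N : ℂ) ≠ 0 := Nat.cast_ne_zero.mpr (by omega)
  have hNR : (0 : ℝ) < N := by exact_mod_cast Nat.lt_of_lt_of_le Nat.zero_lt_one hN1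
  have hNR1 : (1 : ℝ) ≤ N := by exact_mod_cast hN1
  have hp1 : Complex.abs p.1 ≤ A := by
    have := Complex.abs.nonneg p.2; linarith
  have hp2 : Complex.abs p.2 ≤ A := by
    have := Complex.abs.nonneg p.1; linarith
  have habsw : Complex.abs w ≤ A := by
    calc Complex.abs w ≤ Complex.abs p.1 + Complex.abs ((starRingEnd ℂ) p.2) :=
          Complex.abs.add_le _ _
      _ = Complex.abs p.1 + Complex.abs p.2 := by rw [Complex.abs_conj]
      _ ≤ A := hp'
  have habsc : Complex.abs c ≤ A ^ 2 := by
    rw [hc, map_mul, Complex.abs_conj, sq]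
    exact mul_le_mul hp1 hp2 (Complex.abs.nonneg _) hA.le
  set x : ℂ := w + c / N with hx
  have habsx : Complex.abs x ≤ B := by
    calc Complex.abs x ≤ Complex.abs w + Complex.abs (c / N) := Complex.abs.add_le _ _
      _ = Complex.abs w + Complex.abs c / N := by
          rw [map_div₀]; norm_num
      _ ≤ A + A ^ 2 / N := by gcongr
      _ ≤ A + A ^ 2 := by
          have : A ^ 2 / (N : ℝ) ≤ A ^ 2 := by
            apply div_le_self (by positivity) hNR1
          linarith
  set a : ℕ → ℂ := fun j => (((N + 1).choose (j + 1) : ℂ) / (N : ℂ) ^ (j + 1)) * x ^ j with ha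
  set b : ℕ → ℂ := fun j => w ^ j / ((j + 1)! : ℂ) with hb
  have hcast : ∀ j, (((N + 1).choose (j + 1) : ℂ) / (N : ℂ) ^ (j + 1)) = ((ρ j N : ℝ) : ℂ) := by
    intro j; rw [hρdef]; push_cast; ring
  have hρ0 : ∀ j, 0 ≤ ρ j N := fun j => by
    rw [hρdef]; positivity
  -- rewrite the partial sum
  have key : (1 / (N : ℂ)) * ∑ k ∈ Finset.range (N + 1),
      (1 + p.1 / N) ^ k * (1 + (starRingEnd ℂ) p.2 / N) ^ k
        = ∑ j ∈ Finset.range (N + 1), a j := by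
    have h1 : ∀ k, (1 + p.1 / N) ^ k * (1 + (starRingEnd ℂ) p.2 / N) ^ k
        = (1 + x / N) ^ k := by
      intro k
      rw [← mul_pow]
      congr 1
      rw [hx, hw, hc]
      field_simp
      ring
    rw [Finset.sum_congr rfl (fun k _ => h1 k), sum_pow_one_add, Finset.mul_sum]
    refine Finset.sum_congr rfl fun j _ => ?_
    rw [ha, div_pow]
    ring
  rw [key]
  -- per-term bounds
  have habs_a : ∀ j, Complex.abs (a j) ≤ M j := by
    intro j
    rw [ha]
    simp only []
    rw [map_mul, hcast j, map_pow]
    rw [Complex.abs_ofReal, _root_.abs_of_nonneg (hρ0 j)]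
    calc ρ j N * Complex.abs x ^ j ≤ (2 ^ (j + 1) / (j + 1)!) * B ^ j := by
          exact mul_le_mul (rho_le j N hN1) (pow_le_pow_left₀ (Complex.abs.nonneg _) habsx j)
            (by positivity) (by positivity)
      _ = M j := by rw [hMdef]; ring
  have habs_b : ∀ j, Complex.abs (b j) ≤ M j := by
    intro j
    rw [hb]
    simp only []
    rw [map_div₀, map_pow]
    have h1 : Complex.abs ((((j + 1)! : ℕ) : ℂ)) = ((j + 1)! : ℝ) := by
      rw [Complex.abs_natCast]
    rw [h1]
    calc Complex.abs w ^ j / ((j + 1)! : ℝ) ≤ A ^ j / ((j + 1)! : ℝ) := by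
          gcongr
      _ ≤ M j := by
          rw [hMdef]
          have h3 : (1 : ℝ) ≤ 2 ^ (j + 1) := by exact_mod_cast Nat.one_le_two_pow
          have h2 : A ^ j ≤ 2 ^ (j + 1) * B ^ j := by
            calc A ^ j ≤ B ^ j := pow_le_pow_left₀ hA.le hAB j
              _ = 1 * B ^ j := (one_mul _).symm
              _ ≤ 2 ^ (j + 1) * B ^ j :=
                  mul_le_mul_of_nonneg_right h3 (pow_nonneg hB.le j)
          exact div_le_div₀ (by positivity) h2
            (by exact_mod_cast (j + 1).factorial_pos) le_rfl
  have hab : ∀ j, Complex.abs (a j - b j) ≤ D j N := by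
    intro j
    have hxw : Complex.abs (x - w) ≤ A ^ 2 / N := by
      have he : x - w = c / N := by rw [hx]; ring
      rw [he, map_div₀, Complex.abs_natCast]
      gcongr
    have hpow : Complex.abs (x ^ j - w ^ j) ≤ j * B ^ (j - 1) * (A ^ 2 / N) := by
      have h1 := norm_pow_sub_pow_le' x w
        (by simpa [Complex.norm_eq_abs] using habsx)
        (by simpa [Complex.norm_eq_abs] using habsw.trans hAB) j
      rw [Complex.norm_eq_abs, Complex.norm_eq_abs] at h1
      calc Complex.abs (x ^ j - w ^ j) ≤ j * B ^ (j - 1) * Complex.abs (x - w) := h1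
        _ ≤ j * B ^ (j - 1) * (A ^ 2 / N) := by
            refine mul_le_mul_of_nonneg_left hxw (by positivity)
    have decomp : a j - b j
        = ((ρ j N : ℝ) : ℂ) * (x ^ j - w ^ j) + (((ρ j N - 1 / (j + 1)! : ℝ)) : ℂ) * w ^ j := by
      simp only [ha, hb]
      rw [hcast j]
      push_cast
      ring
    rw [decomp]
    calc Complex.abs (((ρ j N : ℝ) : ℂ) * (x ^ j - w ^ j)
          + (((ρ j N - 1 / (j + 1)! : ℝ)) : ℂ) * w ^ j)
        ≤ Complex.abs (((ρ j N : ℝ) : ℂ) * (x ^ j - w ^ j))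
            + Complex.abs ((((ρ j N - 1 / (j + 1)! : ℝ)) : ℂ) * w ^ j) := Complex.abs.add_le _ _
      _ = ρ j N * Complex.abs (x ^ j - w ^ j)
            + |ρ j N - 1 / (j + 1)!| * Complex.abs w ^ j := by
          rw [map_mul, map_mul, Complex.abs_ofReal, Complex.abs_ofReal,
            _root_.abs_of_nonneg (hρ0 j), map_pow]
      _ ≤ (2 ^ (j + 1) / (j + 1)!) * (j * B ^ (j - 1) * (A ^ 2 / N))
            + |ρ j N - 1 / (j + 1)!| * A ^ j := by
          refine add_le_add ?_ ?_
          · exact mul_le_mul (rho_le j N hN1) hpow (Complex.abs.nonneg _) (by positivity)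
          · exact mul_le_mul_of_nonneg_left
              (pow_le_pow_left₀ (Complex.abs.nonneg _) habsw j) (abs_nonneg _)
      _ = D j N := by rw [hDdef]; ring
  have hsplitF : ∑ j ∈ Finset.range (N + 1), a j
      = ∑ j ∈ Finset.range J, a j + ∑ j ∈ Finset.Ico J (N + 1), a j :=
    (Finset.sum_range_add_sum_Ico _ (by omega)).symm
  have hbsummable : Summable b :=
    Summable.of_norm_bounded hMsum fun j => by
      simpa [Complex.norm_eq_abs] using habs_b j
  have hMsummable' : Summable fun k : ℕ => M (k + J) := (summable_nat_add_iff J).mpr hMsum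
  have hMs2 : Summable fun k : ℕ => M (J + k) := by
    simpa [add_comm] using hMsummable'
  have hsplitG : Gker w = ∑ j ∈ Finset.range J, b j + ∑' j : ℕ, b (j + J) := by
    rw [Gker_eq_tsum w, ← Summable.sum_add_tsum_nat_add J hbsummable]
  have htailF : Complex.abs (∑ j ∈ Finset.Ico J (N + 1), a j) ≤ ε / 3 := by
    calc Complex.abs (∑ j ∈ Finset.Ico J (N + 1), a j)
        ≤ ∑ j ∈ Finset.Ico J (N + 1), Complex.abs (a j) := Complex.abs.sum_le _ _
      _ ≤ ∑ j ∈ Finset.Ico J (N + 1), M j := Finset.sum_le_sum fun j _ => habs_a j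
      _ = ∑ i ∈ Finset.range (N + 1 - J), M (J + i) := by rw [Finset.sum_Ico_eq_sum_range]
      _ ≤ ∑' i : ℕ, M (J + i) := Summable.sum_le_tsum _ (fun i _ => hM0 _) hMs2
      _ = ∑' k : ℕ, M (k + J) := tsum_congr fun k => by rw [add_comm]
      _ ≤ ε / 3 := hJ.le
  have hbs2 : Summable fun j : ℕ => ‖b (j + J)‖ := by
    refine Summable.of_nonneg_of_le (fun j => norm_nonneg _) (fun j => ?_) hMsummable'
    simpa [Complex.norm_eq_abs] using habs_b (j + J)
  have htailG : Complex.abs (∑' j : ℕ, b (j + J)) ≤ ε / 3 := by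
    calc Complex.abs (∑' j : ℕ, b (j + J)) = ‖∑' j : ℕ, b (j + J)‖ :=
          (Complex.norm_eq_abs _).symm
      _ ≤ ∑' j : ℕ, ‖b (j + J)‖ := norm_tsum_le_tsum_norm hbs2
      _ ≤ ∑' k : ℕ, M (k + J) := Summable.tsum_le_tsum (fun j => by
            simpa [Complex.norm_eq_abs] using habs_b (j + J)) hbs2 hMsummable'
      _ ≤ ε / 3 := hJ.le
  have hheadbd : Complex.abs (∑ j ∈ Finset.range J, (b j - a j))
      ≤ ∑ j ∈ Finset.range J, D j N := by
    calc Complex.abs (∑ j ∈ Finset.range J, (b j - a j))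
        ≤ ∑ j ∈ Finset.range J, Complex.abs (b j - a j) := Complex.abs.sum_le _ _
      _ ≤ ∑ j ∈ Finset.range J, D j N := Finset.sum_le_sum fun j _ => by
          rw [AbsoluteValue.map_sub]
          exact hab j
  rw [dist_eq_norm, Complex.norm_eq_abs]
  have hdecomp : Gker w - ∑ j ∈ Finset.range (N + 1), a j
      = (∑ j ∈ Finset.range J, (b j - a j))
        + ((∑' j : ℕ, b (j + J)) - ∑ j ∈ Finset.Ico J (N + 1), a j) := by
    rw [hsplitG, hsplitF, Finset.sum_sub_distrib]
    ring
  have hsub : ∀ u v : ℂ, Complex.abs (u - v) ≤ Complex.abs u + Complex.abs v := fun u v => by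
    simpa [Complex.norm_eq_abs] using norm_sub_le u v
  rw [hdecomp]
  calc Complex.abs ((∑ j ∈ Finset.range J, (b j - a j))
          + ((∑' j : ℕ, b (j + J)) - ∑ j ∈ Finset.Ico J (N + 1), a j))
      ≤ Complex.abs (∑ j ∈ Finset.range J, (b j - a j))
          + (Complex.abs (∑' j : ℕ, b (j + J))
            + Complex.abs (∑ j ∈ Finset.Ico J (N + 1), a j)) := by
        refine le_trans (Complex.abs.add_le _ _) ?_
        exact add_le_add le_rfl (hsub _ _)
    _ < ε / 3 + (ε / 3 + ε / 3) :=
        add_lt_add_of_lt_of_le (lt_of_le_of_lt hheadbd hheadN) (add_le_add htailG htailF)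
    _ = ε := by ring
end
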